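/- Let n = 2m+1, H_{k,n−k+1} = E_{k,k} − E_{n−k+1,n−k+1}, and H̃_k^⊥ = Σ_{j=k}^{n−k} (−1)^{j+1}(E_{j,j} − E_{j+1,j+1}). Then the linear span of {H_{k,n−k+1} + H̃_k^⊥ : k = 1, ..., m} over ℂ contains each of the Cartan elements H_{2k−1,2k} = E_{2k−1,2k−1} − E_{2k,2k} for k = 1, ..., m. -/
import Mathlib

noncomputable def Eu (n i j : ℕ) : Matrix (Fin n) (Fin n) ℂ :=
  Matrix.of fun a b => if (a : ℕ) + 1 = i ∧ (b : ℕ) + 1 = j then 1 else 0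

noncomputable def Htilde (n i : ℕ) : Matrix (Fin n) (Fin n) ℂ :=
  ∑ j ∈ Finset.Icc i (n - i), ((-1 : ℂ) ^ (j + 1)) • (Eu n j j - Eu n (j + 1) (j + 1))

lemma Eu_apply (n i j : ℕ) (a b : Fin n) :
    Eu n i j a b = if (a : ℕ) + 1 = i ∧ (b : ℕ) + 1 = j then 1 else 0 := rfl

lemma sum_diag (s : Finset ℕ) (c : ℕ → ℂ) (p q : ℕ) :
    (∑ j ∈ s, c j * (if p = j ∧ q = j then 1 else 0)) =
      if p = q ∧ p ∈ s then c p else 0 := by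
  rcases eq_or_ne p q with rfl | h
  · simp only [and_self, true_and, mul_ite, mul_one, mul_zero]
    exact Finset.sum_ite_eq s p c
  · have hc : ∀ j, ¬(p = j ∧ q = j) := by rintro j ⟨rfl, rfl⟩; exact h rfl
    simp [hc, h]

lemma Htilde_apply (n i : ℕ) (a b : Fin n) :
    Htilde n i a b =
      (if (a : ℕ) = (b : ℕ) ∧ i ≤ (a : ℕ) + 1 ∧ (a : ℕ) + 1 ≤ n - i then (-1 : ℂ) ^ (a : ℕ) else 0)
      + (if (a : ℕ) = (b : ℕ) ∧ i ≤ (a : ℕ) ∧ (a : ℕ) ≤ n - i then (-1 : ℂ) ^ (a : ℕ) else 0) := by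
  unfold Htilde
  rw [Matrix.sum_apply]
  simp only [Matrix.smul_apply, Matrix.sub_apply, Eu, Matrix.of_apply, smul_eq_mul, mul_sub]
  rw [Finset.sum_sub_distrib]
  rw [sum_diag (Finset.Icc i (n - i)) (fun j => (-1 : ℂ) ^ (j + 1)) ((a : ℕ) + 1) ((b : ℕ) + 1)]
  simp only [add_left_inj]
  rw [sum_diag (Finset.Icc i (n - i)) (fun j => (-1 : ℂ) ^ (j + 1)) ((a : ℕ)) ((b : ℕ))]
  simp only [Finset.mem_Icc]
  have h1 : ((-1 : ℂ)) ^ ((a : ℕ) + 1 + 1) = (-1 : ℂ) ^ (a : ℕ) := by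
    rw [pow_succ, pow_succ]; ring
  have h2 : ((-1 : ℂ)) ^ ((a : ℕ) + 1) = -(-1 : ℂ) ^ (a : ℕ) := by
    rw [pow_succ]; ring
  rw [h1, h2]
  split_ifs <;> first | ring | (exfalso; omega)

set_option maxHeartbeats 4000000 in
lemma idA (m k : ℕ) (hk1 : 1 ≤ k) (hk2 : 2 * k ≤ m) :
    ((Eu (2*m+1) (2*k-1) (2*k-1) - Eu (2*m+1) ((2*m+1)-(2*k-1)+1) ((2*m+1)-(2*k-1)+1))
        + Htilde (2*m+1) (2*k-1))
    - ((Eu (2*m+1) (2*k) (2*k) - Eu (2*m+1) ((2*m+1)-(2*k)+1) ((2*m+1)-(2*k)+1))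
        + Htilde (2*m+1) (2*k))
    = (2 : ℂ) • (Eu (2*m+1) (2*k-1) (2*k-1) - Eu (2*m+1) (2*k) (2*k)) := by
  ext a b
  simp only [Matrix.sub_apply, Matrix.add_apply, Matrix.smul_apply, Htilde_apply, Eu_apply,
    smul_eq_mul]
  rcases Nat.even_or_odd (a : ℕ) with h | h
  · rw [h.neg_one_pow]; rw [Nat.even_iff] at h
    split_ifs <;> first | (exfalso; omega) | norm_num
  · rw [h.neg_one_pow]; rw [Nat.odd_iff] at h
    split_ifs <;> first | (exfalso; omega) | norm_num

set_option maxHeartbeats 4000000 in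
lemma idBD (m k : ℕ) (hk2 : k ≤ m) (h1 : m < 2 * k) (h2 : 2 * k ≤ m + 2) :
    ((Eu (2*m+1) m m - Eu (2*m+1) ((2*m+1)-m+1) ((2*m+1)-m+1)) + Htilde (2*m+1) m)
    = (2 : ℂ) • (Eu (2*m+1) (2*k-1) (2*k-1) - Eu (2*m+1) (2*k) (2*k)) := by
  ext a b
  simp only [Matrix.sub_apply, Matrix.add_apply, Matrix.smul_apply, Htilde_apply, Eu_apply,
    smul_eq_mul]
  rcases Nat.even_or_odd (a : ℕ) with h | h
  · rw [h.neg_one_pow]; rw [Nat.even_iff] at h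
    split_ifs <;> first | (exfalso; omega) | norm_num
  · rw [h.neg_one_pow]; rw [Nat.odd_iff] at h
    split_ifs <;> first | (exfalso; omega) | norm_num

set_option maxHeartbeats 4000000 in
lemma idC (m k t : ℕ) (hk2 : k ≤ m) (ht : k + t = m + 1) (h3 : m + 3 ≤ 2 * k) :
    ((Eu (2*m+1) (2*t) (2*t) - Eu (2*m+1) ((2*m+1)-(2*t)+1) ((2*m+1)-(2*t)+1))
        + Htilde (2*m+1) (2*t))
    - ((Eu (2*m+1) (2*t+1) (2*t+1) - Eu (2*m+1) ((2*m+1)-(2*t+1)+1) ((2*m+1)-(2*t+1)+1))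
        + Htilde (2*m+1) (2*t+1))
    = (2 : ℂ) • (Eu (2*m+1) (2*k-1) (2*k-1) - Eu (2*m+1) (2*k) (2*k)) := by
  ext a b
  simp only [Matrix.sub_apply, Matrix.add_apply, Matrix.smul_apply, Htilde_apply, Eu_apply,
    smul_eq_mul]
  rcases Nat.even_or_odd (a : ℕ) with h | h
  · rw [h.neg_one_pow]; rw [Nat.even_iff] at h
    split_ifs <;> first | (exfalso; omega) | norm_num
  · rw [h.neg_one_pow]; rw [Nat.odd_iff] at h
    split_ifs <;> first | (exfalso; omega) | norm_num

/-- For `n = 2m+1`, the span of `{H_{k,n−k+1} + H̃_k^⊥ : k = 1, …, m}` contains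
each Cartan element `H_{2k−1,2k} = E_{2k−1,2k−1} − E_{2k,2k}`, `k = 1, …, m`. -/
theorem stmt14 (m k : ℕ) (hk1 : 1 ≤ k) (hk2 : k ≤ m) :
    Eu (2 * m + 1) (2 * k - 1) (2 * k - 1) - Eu (2 * m + 1) (2 * k) (2 * k) ∈
      Submodule.span ℂ
        {M : Matrix (Fin (2 * m + 1)) (Fin (2 * m + 1)) ℂ |
          ∃ j, 1 ≤ j ∧ j ≤ m ∧
            M = (Eu (2 * m + 1) j j
                  - Eu (2 * m + 1) ((2 * m + 1) - j + 1) ((2 * m + 1) - j + 1))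
                + Htilde (2 * m + 1) j} := by
  by_cases hA : 2 * k ≤ m
  · have h1 : ((Eu (2*m+1) (2*k-1) (2*k-1)
        - Eu (2*m+1) ((2*m+1)-(2*k-1)+1) ((2*m+1)-(2*k-1)+1)) + Htilde (2*m+1) (2*k-1)) ∈
        Submodule.span ℂ {M : Matrix (Fin (2 * m + 1)) (Fin (2 * m + 1)) ℂ |
          ∃ j, 1 ≤ j ∧ j ≤ m ∧
            M = (Eu (2 * m + 1) j j
                  - Eu (2 * m + 1) ((2 * m + 1) - j + 1) ((2 * m + 1) - j + 1))
                + Htilde (2 * m + 1) j} :=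
      Submodule.subset_span ⟨2*k-1, by omega, by omega, rfl⟩
    have h2 : ((Eu (2*m+1) (2*k) (2*k)
        - Eu (2*m+1) ((2*m+1)-(2*k)+1) ((2*m+1)-(2*k)+1)) + Htilde (2*m+1) (2*k)) ∈
        Submodule.span ℂ {M : Matrix (Fin (2 * m + 1)) (Fin (2 * m + 1)) ℂ |
          ∃ j, 1 ≤ j ∧ j ≤ m ∧
            M = (Eu (2 * m + 1) j j
                  - Eu (2 * m + 1) ((2 * m + 1) - j + 1) ((2 * m + 1) - j + 1))
                + Htilde (2 * m + 1) j} :=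
      Submodule.subset_span ⟨2*k, by omega, by omega, rfl⟩
    have key := idA m k hk1 hA
    rw [show Eu (2 * m + 1) (2 * k - 1) (2 * k - 1) - Eu (2 * m + 1) (2 * k) (2 * k)
        = (2⁻¹ : ℂ) • (((Eu (2*m+1) (2*k-1) (2*k-1)
            - Eu (2*m+1) ((2*m+1)-(2*k-1)+1) ((2*m+1)-(2*k-1)+1)) + Htilde (2*m+1) (2*k-1))
          - ((Eu (2*m+1) (2*k) (2*k)
            - Eu (2*m+1) ((2*m+1)-(2*k)+1) ((2*m+1)-(2*k)+1)) + Htilde (2*m+1) (2*k))) by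
      rw [key, smul_smul]; norm_num]
    exact Submodule.smul_mem _ _ (sub_mem h1 h2)
  · by_cases hB : 2 * k ≤ m + 2
    · have h1 : ((Eu (2*m+1) m m
          - Eu (2*m+1) ((2*m+1)-m+1) ((2*m+1)-m+1)) + Htilde (2*m+1) m) ∈
          Submodule.span ℂ {M : Matrix (Fin (2 * m + 1)) (Fin (2 * m + 1)) ℂ |
            ∃ j, 1 ≤ j ∧ j ≤ m ∧
              M = (Eu (2 * m + 1) j j
                    - Eu (2 * m + 1) ((2 * m + 1) - j + 1) ((2 * m + 1) - j + 1))
                  + Htilde (2 * m + 1) j} :=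
        Submodule.subset_span ⟨m, by omega, by omega, rfl⟩
      have key := idBD m k hk2 (by omega) hB
      rw [show Eu (2 * m + 1) (2 * k - 1) (2 * k - 1) - Eu (2 * m + 1) (2 * k) (2 * k)
          = (2⁻¹ : ℂ) • ((Eu (2*m+1) m m
              - Eu (2*m+1) ((2*m+1)-m+1) ((2*m+1)-m+1)) + Htilde (2*m+1) m) by
        rw [key, smul_smul]; norm_num]
      exact Submodule.smul_mem _ _ h1
    · set t := m + 1 - k with htdef
      have ht : k + t = m + 1 := by omega
      have h1 : ((Eu (2*m+1) (2*t) (2*t)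
          - Eu (2*m+1) ((2*m+1)-(2*t)+1) ((2*m+1)-(2*t)+1)) + Htilde (2*m+1) (2*t)) ∈
          Submodule.span ℂ {M : Matrix (Fin (2 * m + 1)) (Fin (2 * m + 1)) ℂ |
            ∃ j, 1 ≤ j ∧ j ≤ m ∧
              M = (Eu (2 * m + 1) j j
                    - Eu (2 * m + 1) ((2 * m + 1) - j + 1) ((2 * m + 1) - j + 1))
                  + Htilde (2 * m + 1) j} :=
        Submodule.subset_span ⟨2*t, by omega, by omega, rfl⟩
      have h2 : ((Eu (2*m+1) (2*t+1) (2*t+1)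
          - Eu (2*m+1) ((2*m+1)-(2*t+1)+1) ((2*m+1)-(2*t+1)+1)) + Htilde (2*m+1) (2*t+1)) ∈
          Submodule.span ℂ {M : Matrix (Fin (2 * m + 1)) (Fin (2 * m + 1)) ℂ |
            ∃ j, 1 ≤ j ∧ j ≤ m ∧
              M = (Eu (2 * m + 1) j j
                    - Eu (2 * m + 1) ((2 * m + 1) - j + 1) ((2 * m + 1) - j + 1))
                  + Htilde (2 * m + 1) j} :=
        Submodule.subset_span ⟨2*t+1, by omega, by omega, rfl⟩
      have key := idC m k t hk2 ht (by omega)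
      rw [show Eu (2 * m + 1) (2 * k - 1) (2 * k - 1) - Eu (2 * m + 1) (2 * k) (2 * k)
          = (2⁻¹ : ℂ) • (((Eu (2*m+1) (2*t) (2*t)
              - Eu (2*m+1) ((2*m+1)-(2*t)+1) ((2*m+1)-(2*t)+1)) + Htilde (2*m+1) (2*t))
            - ((Eu (2*m+1) (2*t+1) (2*t+1)
              - Eu (2*m+1) ((2*m+1)-(2*t+1)+1) ((2*m+1)-(2*t+1)+1)) + Htilde (2*m+1) (2*t+1))) by
        rw [key, smul_smul]; norm_num]
      exact Submodule.smul_mem _ _ (sub_mem h1 h2)
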